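/- Let Φ = (φ_1, …, φ_M) be a unit-norm frame for ℝ^N (each ‖φ_i‖ = 1 and the φ_i span ℝ^N). If c' ∈ ℝ^M with c'_i ≥ 0 attains the infimum of ‖I_N − S(c)‖₂ over all c ∈ ℝ^M with c_i ≥ 0, then c'_i ≤ 2N for every i = 1, …, M; in particular the optimal scalings are uniformly bounded by a constant depending only on N. -/

import Mathlib

open scoped RealInnerProductSpace Matrix


/-- The ℓ²→ℓ² operator norm (largest singular value) of a square real matrix. -/
noncomputable def opNorm {N : ℕ} (A : Matrix (Fin N) (Fin N) ℝ) : ℝ :=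
  ‖(Matrix.toEuclideanCLM (𝕜 := ℝ) A : EuclideanSpace ℝ (Fin N) →L[ℝ] EuclideanSpace ℝ (Fin N))‖

/-- `frameOp φ c = ∑ i, c i • φ i φ iᵀ`. -/
noncomputable def frameOp {N M : ℕ} (φ : Fin M → (Fin N → ℝ)) (c : Fin M → ℝ) :
    Matrix (Fin N) (Fin N) ℝ :=
  ∑ i, c i • Matrix.vecMulVec (φ i) (φ i)

/-- if `Φ` is a unit-norm frame for `ℝ^N` and `c' ≥ 0` attains the infimum
of `‖I - S(c)‖₂` over `c ≥ 0`, then `c'_i ≤ 2N` for every `i`. -/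
theorem stmt_11 (N M : ℕ) (φ : Fin M → (Fin N → ℝ))
    (hunit : ∀ i, ∑ k, (φ i k) ^ 2 = 1)
    (hspan : Submodule.span ℝ (Set.range φ) = ⊤)
    (c' : Fin M → ℝ) (hc' : ∀ i, 0 ≤ c' i)
    (hopt : ∀ d : Fin M → ℝ, (∀ i, 0 ≤ d i) →
      opNorm (1 - frameOp φ c') ≤ opNorm (1 - frameOp φ d)) :
    ∀ i, c' i ≤ 2 * N := by
  intro i
  -- N must be positive, else hunit i is absurd
  rcases Nat.eq_zero_or_pos N with hN | hN
  · subst hN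
    have := hunit i
    simp at this
  have hNtriv : Nontrivial (EuclideanSpace ℝ (Fin N)) := by
    haveI : NeZero N := ⟨hN.ne'⟩
    infer_instance
  -- Step 1: opNorm (1 - frameOp φ c') ≤ 1
  have h0 : frameOp φ (0 : Fin M → ℝ) = 0 := by
    simp [frameOp]
  have hone : opNorm (1 - frameOp φ (0 : Fin M → ℝ)) = 1 := by
    rw [h0, sub_zero]
    simp only [opNorm, map_one]
    exact norm_one
  have h1 : opNorm (1 - frameOp φ c') ≤ 1 := by
    have := hopt 0 (fun _ => le_refl 0)
    rwa [hone] at this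
  -- the matrix and its CLM
  set B := (1 : Matrix (Fin N) (Fin N) ℝ) - frameOp φ c' with hB
  set T := (Matrix.toEuclideanCLM (𝕜 := ℝ) B) with hT
  set x : EuclideanSpace ℝ (Fin N) := (WithLp.equiv 2 (Fin N → ℝ)).symm (φ i) with hx
  have hxnorm : ‖x‖ ^ 2 = 1 := by
    rw [← real_inner_self_eq_norm_sq]
    rw [PiLp.inner_apply]
    simpa [← sq, hx] using hunit i
  have hxnorm1 : ‖x‖ = 1 := by
    nlinarith [norm_nonneg x]
  -- quadratic form bound
  have hquad : abs (⟪x, T x⟫) ≤ 1 := by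
    calc abs (⟪x, T x⟫) ≤ ‖x‖ * ‖T x‖ := abs_real_inner_le_norm x (T x)
    _ ≤ ‖x‖ * (‖T‖ * ‖x‖) := by
        gcongr
        exact T.le_opNorm x
    _ = ‖T‖ := by rw [hxnorm1]; ring
    _ ≤ 1 := h1
  -- compute the quadratic form
  have hcomp : ⟪x, T x⟫ = 1 - ∑ j, c' j * (φ j ⬝ᵥ φ i) ^ 2 := by
    rw [PiLp.inner_apply]
    have hTx : ∀ k, (T x) k = B.mulVec (φ i) k := by
      intro k
      rw [hT, hx]
      rfl
    simp only [RCLike.inner_apply, starRingEnd_apply, star_trivial]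
    have : ∑ k, x k * (T x) k = φ i ⬝ᵥ B.mulVec (φ i) := by
      simp only [dotProduct]
      refine Finset.sum_congr rfl fun k _ => ?_
      rw [hTx k]
      rfl
    rw [Finset.sum_congr rfl (fun k _ => mul_comm ((T x) k) (x k)), this, hB, Matrix.sub_mulVec,
      dotProduct_sub, Matrix.one_mulVec]
    have hdot : φ i ⬝ᵥ φ i = 1 := by
      simpa [dotProduct, ← sq] using hunit i
    rw [hdot]
    congr 1
    -- φ i ⬝ᵥ (frameOp φ c').mulVec (φ i) = ∑ j, c' j * (φ j ⬝ᵥ φ i)^2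
    simp only [frameOp, dotProduct, Matrix.mulVec, dotProduct,
      Finset.sum_apply, Matrix.sum_apply, Matrix.smul_apply, Matrix.vecMulVec_apply,
      smul_eq_mul]
    calc ∑ k, φ i k * ∑ l, (∑ j, c' j * (φ j k * φ j l)) * φ i l
        = ∑ k, ∑ l, ∑ j, c' j * (φ j k * φ i k) * (φ j l * φ i l) := by
          refine Finset.sum_congr rfl fun k _ => ?_
          rw [Finset.mul_sum]
          refine Finset.sum_congr rfl fun l _ => ?_
          rw [Finset.sum_mul, Finset.mul_sum]
          exact Finset.sum_congr rfl fun j _ => by ring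
      _ = ∑ k, ∑ j, ∑ l, c' j * (φ j k * φ i k) * (φ j l * φ i l) := by
          exact Finset.sum_congr rfl fun k _ => Finset.sum_comm
      _ = ∑ j, ∑ k, ∑ l, c' j * (φ j k * φ i k) * (φ j l * φ i l) :=
          Finset.sum_comm
      _ = ∑ j, c' j * (∑ l, φ j l * φ i l) ^ 2 := by
          refine Finset.sum_congr rfl fun j _ => ?_
          rw [sq, Finset.sum_mul_sum, Finset.mul_sum]
          refine Finset.sum_congr rfl fun k _ => ?_
          rw [Finset.mul_sum]
          exact Finset.sum_congr rfl fun l _ => by ring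
  -- lower bound on the sum
  have hsum : c' i ≤ ∑ j, c' j * (φ j ⬝ᵥ φ i) ^ 2 := by
    have hdot : φ i ⬝ᵥ φ i = 1 := by
      simpa [dotProduct, ← sq] using hunit i
    have := Finset.single_le_sum (f := fun j => c' j * (φ j ⬝ᵥ φ i) ^ 2)
      (fun j _ => mul_nonneg (hc' j) (sq_nonneg _)) (Finset.mem_univ i)
    simpa [hdot] using this
  have h2 : ∑ j, c' j * (φ j ⬝ᵥ φ i) ^ 2 ≤ 2 := by
    have := abs_le.mp hquad
    rw [hcomp] at this
    linarith [this.1]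
  have : (1 : ℝ) ≤ N := by exact_mod_cast hN
  linarith
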